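/- For every integer n ≥ 1, 2·Σ_{m=1}^n (−1)^m·A_{nm}·m = (−1)^n + 1/A_{n0}. -/

import Mathlib

open Finset

/-- The coefficient `A_{nm} := Γ(n+m+1/2) / ((2m-1)·(n-m)!·m!·Γ(m+1/2))`. -/
noncomputable def Acoef (n m : ℕ) : ℝ :=
  Real.Gamma ((n : ℝ) + m + 1 / 2) /
    ((2 * (m : ℝ) - 1) * (Nat.factorial (n - m) : ℝ) * (Nat.factorial m : ℝ) *
      Real.Gamma ((m : ℝ) + 1 / 2))



noncomputable def bb (n m : ℕ) : ℚ :=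
  if m ≤ n then ((2*n+2*m).factorial : ℚ) /
    (4^n * ((n+m).factorial : ℚ) * ((2*m).factorial : ℚ) * ((n-m).factorial : ℚ)) else 0

noncomputable def aa (n m : ℕ) : ℚ := bb n m / (2*(m:ℚ) - 1)

lemma fac_ne (k : ℕ) : ((k.factorial : ℚ)) ≠ 0 := Nat.cast_ne_zero.mpr k.factorial_ne_zero

lemma two_m_sub_one_ne (m : ℕ) : (2*(m:ℚ) - 1) ≠ 0 := by
  intro h
  have h2 : ((2*m : ℕ) : ℚ) = ((1:ℕ):ℚ) := by push_cast; linarith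
  have := Nat.cast_injective h2
  omega

lemma bb_left (m d : ℕ) :
    (2*(d:ℚ)+2) * bb (m+d+1) m = (2*((m:ℚ)+d)+2*m+1) * bb (m+d) m := by
  have h1 : m ≤ m + d + 1 := by omega
  have h2 : m ≤ m + d := by omega
  rw [bb, bb, if_pos h1, if_pos h2]
  have e1 : m + d + 1 - m = d + 1 := by omega
  have e2 : m + d - m = d := by omega
  have e3 : 2*(m+d+1)+2*m = (2*(m+d)+2*m) + 1 + 1 := by ring
  have e4 : (m+d+1)+m = ((m+d)+m) + 1 := by ring
  rw [e1, e2, e3, e4]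
  simp only [Nat.factorial_succ]
  push_cast
  field_simp
  ring

lemma bb_step (m d : ℕ) :
    ((m:ℚ)+1)*(2*(m:ℚ)+1) * bb (m+1+d) (m+1) =
      (2*((m:ℚ)+1+d)+2*m+1)*((d:ℚ)+1) * bb (m+1+d) m := by
  have h1 : m + 1 ≤ m + 1 + d := by omega
  have h2 : m ≤ m + 1 + d := by omega
  rw [bb, bb, if_pos h1, if_pos h2]
  have e1 : m + 1 + d - (m+1) = d := by omega
  have e2 : m + 1 + d - m = d + 1 := by omega
  have e3 : 2*(m+1+d)+2*(m+1) = (2*(m+1+d)+2*m) + 1 + 1 := by ring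
  have e4 : (m+1+d)+(m+1) = ((m+1+d)+m) + 1 := by ring
  have e5 : 2*(m+1) = 2*m + 1 + 1 := by ring
  rw [e1, e2, e3, e4, e5]
  simp only [Nat.factorial_succ]
  push_cast
  field_simp
  ring

lemma bb_out (n m : ℕ) (h : n < m) : bb n m = 0 := if_neg (by omega)

lemma bb_left' (n m : ℕ) (h : m ≤ n) :
    (2*((n:ℚ)-m)+2) * bb (n+1) m = (2*(n:ℚ)+2*m+1) * bb n m := by
  obtain ⟨d, rfl⟩ := Nat.exists_eq_add_of_le h
  have := bb_left m d
  push_cast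
  push_cast at this
  linear_combination this

lemma bb_step' (n m : ℕ) (h : m + 1 ≤ n) :
    ((m:ℚ)+1)*(2*(m:ℚ)+1) * bb n (m+1) =
      (2*(n:ℚ)+2*m+1)*((n:ℚ)-m) * bb n m := by
  obtain ⟨d, rfl⟩ := Nat.exists_eq_add_of_le h
  have := bb_step m d
  push_cast
  push_cast at this
  linear_combination this

noncomputable def H1 (n : ℕ) : ℕ → ℚ
  | 0 => 0
  | m+1 => (4*(n:ℚ)+3) * (2*(n:ℚ)+2*m+1) / ((2*(n:ℚ)+1)*(2*(n:ℚ)+2)) * ((-1)^m * bb n m)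

noncomputable def H2 (n : ℕ) : ℕ → ℚ
  | 0 => 0
  | m+1 => (4*(n:ℚ)+3) * (4*(m:ℚ)*((m:ℚ)+n)-(2*(n:ℚ)+1)) / ((2*(n:ℚ)+1)*(2*(n:ℚ)+2))
      * ((-1)^m * aa n m)

lemma cert1 (n m : ℕ) :
    (-1:ℚ)^m * bb (n+1) m + (-1:ℚ)^m * bb n m = H1 n (m+1) - H1 n m := by
  have hne1 : ((2:ℚ)*n+1) ≠ 0 := by positivity
  have hne2 : ((2:ℚ)*n+2) ≠ 0 := by positivity
  rcases Nat.lt_or_ge n m with hm | hm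
  · rcases Nat.lt_or_ge (n+1) m with hm1 | hm1
    · -- m ≥ n + 2
      obtain ⟨k, rfl⟩ : ∃ k, m = k + 1 := ⟨m - 1, by omega⟩
      rw [bb_out _ _ (by omega), bb_out _ _ (by omega)]
      rw [H1, H1, bb_out _ _ (by omega), bb_out _ _ (by omega)]
      ring
    · -- m = n + 1
      have hm2 : m = n + 1 := by omega
      subst hm2
      have h0 : bb n (n+1) = 0 := bb_out n (n+1) (by omega)
      have hne3 : ((n:ℚ)+1)*(2*(n:ℚ)+1) ≠ 0 := by positivity
      have e1 := bb_step' (n+1) n (by omega)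
      have e2 := bb_left' n n le_rfl
      have E1 : bb (n+1) (n+1) =
          ((2*((n:ℚ)+1)+2*n+1)*(((n:ℚ)+1)-n) * bb (n+1) n) / (((n:ℚ)+1)*(2*(n:ℚ)+1)) := by
        rw [eq_div_iff hne3]; push_cast at e1 ⊢; linear_combination e1
      have E2 : bb (n+1) n = ((2*(n:ℚ)+2*n+1) * bb n n) / (2*((n:ℚ)-n)+2) := by
        rw [eq_div_iff (by norm_num : (2*((n:ℚ)-n)+2) ≠ 0)]; linear_combination e2
      rw [H1, H1, h0, E1, E2]
      field_simp
      ring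
  · -- m ≤ n
    rcases Nat.eq_zero_or_pos m with rfl | hm0
    · have e := bb_left' n 0 (by omega)
      have E : bb (n+1) 0 = ((2*(n:ℚ)+2*0+1) * bb n 0) / (2*(n:ℚ)+2) := by
        rw [eq_div_iff (by positivity : (2*(n:ℚ)+2) ≠ 0)]; linear_combination e
      rw [H1, H1, E]
      field_simp
      ring
    · obtain ⟨k, rfl⟩ : ∃ k, m = k + 1 := ⟨m - 1, by omega⟩
      have hkn : (k:ℚ) + 1 ≤ n := by exact_mod_cast hm
      have hd1 : (2*((n:ℚ)-(k+1))+2) ≠ 0 := by intro h; nlinarith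
      have hd2 : ((k:ℚ)+1)*(2*(k:ℚ)+1) ≠ 0 := by positivity
      have e1 := bb_left' n (k+1) hm
      have e2 := bb_step' n k (by omega)
      have E1 : bb (n+1) (k+1) =
          ((2*(n:ℚ)+2*(k+1)+1) * bb n (k+1)) / (2*((n:ℚ)-(k+1))+2) := by
        rw [eq_div_iff hd1]; push_cast at e1 ⊢; linear_combination e1
      have E2 : bb n (k+1) =
          ((2*(n:ℚ)+2*k+1)*((n:ℚ)-k) * bb n k) / (((k:ℚ)+1)*(2*(k:ℚ)+1)) := by
        rw [eq_div_iff hd2]; linear_combination e2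
      rw [H1, H1, E1, E2]
      push_cast
      have hnk : (n:ℚ) - k ≠ 0 := by intro h; linarith
      rw [show (2*((n:ℚ)-(k+1))+2) = 2*((n:ℚ)-k) by ring]
      field_simp
      ring

lemma cert2 (n m : ℕ) :
    (-1:ℚ)^m * ((2*(n:ℚ)+1) * aa (n+1) m - (2*(n:ℚ)+2) * aa n m) = H2 n (m+1) - H2 n m := by
  have hne1 : ((2:ℚ)*n+1) ≠ 0 := by positivity
  have hne2 : ((2:ℚ)*n+2) ≠ 0 := by positivity
  rcases Nat.lt_or_ge n m with hm | hm
  · rcases Nat.lt_or_ge (n+1) m with hm1 | hm1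
    · obtain ⟨k, rfl⟩ : ∃ k, m = k + 1 := ⟨m - 1, by omega⟩
      rw [H2, H2]
      simp only [aa]
      rw [bb_out _ _ (by omega), bb_out _ _ (by omega), bb_out _ _ (by omega)]
      ring
    · have hm2 : m = n + 1 := by omega
      subst hm2
      have h0 : bb n (n+1) = 0 := bb_out n (n+1) (by omega)
      have hne3 : ((n:ℚ)+1)*(2*(n:ℚ)+1) ≠ 0 := by positivity
      have hne4 : (2*((n:ℚ)+1)-1) ≠ 0 := by
        have := two_m_sub_one_ne (n+1); push_cast at this; exact this
      have hne5 : (2*(n:ℚ)-1) ≠ 0 := two_m_sub_one_ne n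
      have e1 := bb_step' (n+1) n (by omega)
      have e2 := bb_left' n n le_rfl
      have E1 : bb (n+1) (n+1) =
          ((2*((n:ℚ)+1)+2*n+1)*(((n:ℚ)+1)-n) * bb (n+1) n) / (((n:ℚ)+1)*(2*(n:ℚ)+1)) := by
        rw [eq_div_iff hne3]; push_cast at e1 ⊢; linear_combination e1
      have E2 : bb (n+1) n = ((2*(n:ℚ)+2*n+1) * bb n n) / (2*((n:ℚ)-n)+2) := by
        rw [eq_div_iff (by norm_num : (2*((n:ℚ)-n)+2) ≠ 0)]; linear_combination e2
      rw [H2, H2]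
      simp only [aa]
      rw [h0, E1, E2]
      push_cast
      field_simp
      ring
  · rcases Nat.eq_zero_or_pos m with rfl | hm0
    · have e := bb_left' n 0 (by omega)
      have E : bb (n+1) 0 = ((2*(n:ℚ)+2*0+1) * bb n 0) / (2*(n:ℚ)+2) := by
        rw [eq_div_iff (by positivity : (2*(n:ℚ)+2) ≠ 0)]; linear_combination e
      have az : ∀ N, aa N 0 = -bb N 0 := by
        intro N
        rw [aa, show (2*((0:ℕ):ℚ)-1) = -1 by norm_num, div_neg, div_one]
      rw [H2, H2, az, az, E]
      push_cast
      field_simp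
      ring
    · obtain ⟨k, rfl⟩ : ∃ k, m = k + 1 := ⟨m - 1, by omega⟩
      have hkn : (k:ℚ) + 1 ≤ n := by exact_mod_cast hm
      have hd1 : (2*((n:ℚ)-(k+1))+2) ≠ 0 := by intro h; nlinarith
      have hd2 : ((k:ℚ)+1)*(2*(k:ℚ)+1) ≠ 0 := by positivity
      have hne4 : (2*((k:ℚ)+1)-1) ≠ 0 := by
        have := two_m_sub_one_ne (k+1); push_cast at this; exact this
      have hne5 : (2*(k:ℚ)-1) ≠ 0 := two_m_sub_one_ne k
      have e1 := bb_left' n (k+1) hm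
      have e2 := bb_step' n k (by omega)
      have E1 : bb (n+1) (k+1) =
          ((2*(n:ℚ)+2*(k+1)+1) * bb n (k+1)) / (2*((n:ℚ)-(k+1))+2) := by
        rw [eq_div_iff hd1]; push_cast at e1 ⊢; linear_combination e1
      have E2 : bb n (k+1) =
          ((2*(n:ℚ)+2*k+1)*((n:ℚ)-k) * bb n k) / (((k:ℚ)+1)*(2*(k:ℚ)+1)) := by
        rw [eq_div_iff hd2]; linear_combination e2
      rw [H2, H2]
      simp only [aa]
      rw [E1, E2]
      push_cast
      have hnk : (n:ℚ) - k ≠ 0 := by intro h; linarith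
      rw [show (2*((n:ℚ)-(k+1))+2) = 2*((n:ℚ)-k) by ring]
      field_simp
      ring

lemma aa_out (n m : ℕ) (h : n < m) : aa n m = 0 := by rw [aa, bb_out n m h, zero_div]

lemma sum_bb : ∀ n, ∑ m ∈ range (n+1), (-1:ℚ)^m * bb n m = (-1)^n := by
  intro n
  induction n with
  | zero => simp [bb, Nat.factorial]
  | succ n ih =>
    have key : ∑ m ∈ range (n+2), ((-1:ℚ)^m * bb (n+1) m)
        + ∑ m ∈ range (n+2), ((-1:ℚ)^m * bb n m) = 0 := by
      rw [← Finset.sum_add_distrib]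
      rw [Finset.sum_congr rfl (fun m _ => cert1 n m), Finset.sum_range_sub (H1 n)]
      rw [H1, H1, bb_out n (n+1) (by omega)]
      ring
    have h3 : ∑ m ∈ range (n+2), ((-1:ℚ)^m * bb n m) = (-1)^n := by
      rw [Finset.sum_range_succ, bb_out n (n+1) (by omega), ih]; ring
    rw [h3] at key
    rw [pow_succ]
    linarith

noncomputable def CC (n : ℕ) : ℚ := -(4^n * ((n.factorial : ℚ))^2 / ((2*n).factorial : ℚ))

lemma sum_aa : ∀ n, ∑ m ∈ range (n+1), (-1:ℚ)^m * aa n m = CC n := by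
  intro n
  induction n with
  | zero => simp [aa, bb, CC, Nat.factorial]
  | succ n ih =>
    have hne1 : ((2:ℚ)*n+1) ≠ 0 := by positivity
    have key : (2*(n:ℚ)+1) * ∑ m ∈ range (n+2), ((-1:ℚ)^m * aa (n+1) m)
        = (2*(n:ℚ)+2) * ∑ m ∈ range (n+2), ((-1:ℚ)^m * aa n m) := by
      have h := Finset.sum_congr rfl (fun m (_ : m ∈ range (n+2)) => cert2 n m)
      rw [Finset.sum_range_sub (H2 n)] at h
      rw [H2, H2, aa_out n (n+1) (by omega)] at h
      simp only [mul_zero, zero_mul, sub_zero, mul_assoc] at h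
      have h' : ∑ m ∈ range (n+2), ((-1:ℚ)^m * ((2*(n:ℚ)+1) * aa (n+1) m)
          - (-1:ℚ)^m * ((2*(n:ℚ)+2) * aa n m)) = 0 := by
        rw [← h]; apply Finset.sum_congr rfl; intro m _; ring
      rw [Finset.sum_sub_distrib] at h'
      have e1 : ∑ m ∈ range (n+2), ((-1:ℚ)^m * ((2*(n:ℚ)+1) * aa (n+1) m))
          = (2*(n:ℚ)+1) * ∑ m ∈ range (n+2), ((-1:ℚ)^m * aa (n+1) m) := by
        rw [Finset.mul_sum]; apply Finset.sum_congr rfl; intro m _; ring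
      have e2 : ∑ m ∈ range (n+2), ((-1:ℚ)^m * ((2*(n:ℚ)+2) * aa n m))
          = (2*(n:ℚ)+2) * ∑ m ∈ range (n+2), ((-1:ℚ)^m * aa n m) := by
        rw [Finset.mul_sum]; apply Finset.sum_congr rfl; intro m _; ring
      rw [e1, e2] at h'
      linarith [h']
    have h3 : ∑ m ∈ range (n+2), ((-1:ℚ)^m * aa n m) = CC n := by
      rw [Finset.sum_range_succ, aa_out n (n+1) (by omega), ih]; ring
    rw [h3] at key
    have hCC : (2*(n:ℚ)+1) * CC (n+1) = (2*(n:ℚ)+2) * CC n := by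
      rw [CC, CC]
      rw [show 2*(n+1) = (2*n)+1+1 from by ring]
      simp only [Nat.factorial_succ]
      push_cast
      field_simp
      ring
    have := key.trans hCC.symm
    exact mul_left_cancel₀ hne1 this
lemma bb_zero (n : ℕ) : bb n 0 = ((2*n).factorial : ℚ)/(4^n * (n.factorial:ℚ) * (n.factorial:ℚ)) := by
  rw [bb, if_pos (Nat.zero_le n)]
  norm_num

lemma q_final (n : ℕ) :
    2 * ∑ m ∈ Icc 1 n, ((-1:ℚ)^m * aa n m * m) = (-1)^n + 1/(aa n 0) := by
  have hsplit : ∀ f : ℕ → ℚ, ∑ m ∈ Icc 1 n, f m = ∑ m ∈ range (n+1), f m - f 0 := by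
    intro f
    rw [← Finset.Ico_add_one_right_eq_Icc, Finset.range_eq_Ico,
      Finset.sum_eq_sum_Ico_succ_bot (by omega : 0 < n+1) f]
    ring
  have hterm : ∀ m : ℕ, ((-1:ℚ)^m * aa n m * m) * 2 = (-1)^m * bb n m + (-1)^m * aa n m := by
    intro m
    have h := two_m_sub_one_ne m
    rw [aa]
    field_simp
    ring
  have haa0 : aa n 0 = -bb n 0 := by
    rw [aa, show (2*((0:ℕ):ℚ)-1) = -1 by norm_num, div_neg, div_one]
  have hbbne : bb n 0 ≠ 0 := by
    rw [bb_zero]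
    have h1 := fac_ne (2*n); have h2 := fac_ne n
    positivity
  have hC : 1/(aa n 0) = CC n := by
    rw [haa0, bb_zero, CC]
    have h1 := fac_ne (2*n); have h2 := fac_ne n
    field_simp
  calc 2 * ∑ m ∈ Icc 1 n, ((-1:ℚ)^m * aa n m * m)
      = ∑ m ∈ Icc 1 n, (((-1:ℚ)^m * aa n m * m) * 2) := by
        rw [Finset.mul_sum]; apply Finset.sum_congr rfl; intro m _; ring
    _ = ∑ m ∈ Icc 1 n, ((-1:ℚ)^m * bb n m + (-1)^m * aa n m) := by
        apply Finset.sum_congr rfl; intro m _; rw [hterm]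
    _ = (∑ m ∈ Icc 1 n, (-1:ℚ)^m * bb n m) + ∑ m ∈ Icc 1 n, (-1:ℚ)^m * aa n m :=
        Finset.sum_add_distrib
    _ = ((-1)^n - bb n 0) + (CC n - aa n 0) := by
        rw [hsplit (fun m => (-1:ℚ)^m * bb n m), hsplit (fun m => (-1:ℚ)^m * aa n m),
          sum_bb n, sum_aa n]
        norm_num
    _ = (-1)^n + 1/(aa n 0) := by rw [hC, haa0]; ring

lemma Gamma_half (k : ℕ) :
    Real.Gamma ((k:ℝ) + 1/2) = Real.sqrt Real.pi * ((2*k).factorial : ℝ) / (4^k * (k.factorial : ℝ)) := by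
  induction k with
  | zero =>
    rw [show ((0:ℕ):ℝ) + 1/2 = 1/2 from by norm_num, Real.Gamma_one_half_eq]
    simp [Nat.factorial]
  | succ k ih =>
    have h0 : ((k:ℝ) + 1/2) ≠ 0 := by positivity
    have h1 : ((k+1:ℕ):ℝ) + 1/2 = ((k:ℝ) + 1/2) + 1 := by push_cast; ring
    rw [h1, Real.Gamma_add_one h0, ih]
    rw [show 2*(k+1) = (2*k)+1+1 from by ring]
    simp only [Nat.factorial_succ]
    have hf1 : ((2*k).factorial : ℝ) ≠ 0 := Nat.cast_ne_zero.mpr (2*k).factorial_ne_zero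
    have hf2 : ((k.factorial : ℕ) : ℝ) ≠ 0 := Nat.cast_ne_zero.mpr k.factorial_ne_zero
    push_cast
    field_simp
    ring

lemma two_m_sub_one_ne_r (m : ℕ) : (2*(m:ℝ) - 1) ≠ 0 := by
  have := two_m_sub_one_ne m
  intro h
  apply this
  have : ((2*(m:ℚ)-1 : ℚ) : ℝ) = 2*(m:ℝ)-1 := by push_cast; ring
  exact_mod_cast (this.trans h)

lemma Acoef_eq (n m : ℕ) (h : m ≤ n) : Acoef n m = ((aa n m : ℚ) : ℝ) := by
  rw [Acoef, aa, bb, if_pos h]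
  have h1 : ((n:ℝ) + m + 1/2) = (((n+m:ℕ)):ℝ) + 1/2 := by push_cast; ring
  rw [h1, Gamma_half (n+m), Gamma_half m]
  have hπ : Real.sqrt Real.pi ≠ 0 := (Real.sqrt_pos.mpr Real.pi_pos).ne'
  have hf1 : ((2*(n+m)).factorial : ℝ) ≠ 0 := Nat.cast_ne_zero.mpr (Nat.factorial_ne_zero _)
  have hf2 : (((n+m).factorial) : ℝ) ≠ 0 := Nat.cast_ne_zero.mpr (Nat.factorial_ne_zero _)
  have hf3 : ((2*m).factorial : ℝ) ≠ 0 := Nat.cast_ne_zero.mpr (Nat.factorial_ne_zero _)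
  have hf4 : ((m.factorial : ℕ) : ℝ) ≠ 0 := Nat.cast_ne_zero.mpr (Nat.factorial_ne_zero _)
  have hf5 : (((n-m).factorial : ℕ) : ℝ) ≠ 0 := Nat.cast_ne_zero.mpr (Nat.factorial_ne_zero _)
  have h2m := two_m_sub_one_ne_r m
  push_cast
  field_simp
  ring

/-- For every integer `n ≥ 1`,
`2·Σ_{m=1}^n (-1)^m·A_{nm}·m = (-1)^n + 1/A_{n0}`. -/
theorem stmt_5 (n : ℕ) (hn : 1 ≤ n) :
    2 * ∑ m ∈ Finset.Icc 1 n, (-1 : ℝ) ^ m * Acoef n m * m =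
      (-1 : ℝ) ^ n + 1 / Acoef n 0 := by
  have hA : ∀ m ∈ Finset.Icc 1 n, (-1:ℝ)^m * Acoef n m * m
      = (((-1:ℚ)^m * aa n m * m : ℚ) : ℝ) := by
    intro m hm
    rw [Acoef_eq n m (Finset.mem_Icc.mp hm).2]
    push_cast
    ring
  rw [Finset.sum_congr rfl hA, ← Rat.cast_sum, Acoef_eq n 0 (Nat.zero_le n)]
  rw [show ((-1:ℝ))^n = (((-1:ℚ)^n : ℚ):ℝ) from by push_cast; ring]
  rw [show (1:ℝ)/((aa n 0 : ℚ):ℝ) = ((1/aa n 0 : ℚ) : ℝ) from by push_cast; ring]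
  rw [show (2:ℝ) * ((∑ m ∈ Icc 1 n, ((-1:ℚ)^m * aa n m * (m:ℚ)) : ℚ):ℝ)
      = ((2 * ∑ m ∈ Icc 1 n, ((-1:ℚ)^m * aa n m * (m:ℚ)) : ℚ):ℝ) from by push_cast; ring]
  rw [← Rat.cast_add]
  exact Rat.cast_inj.mpr (q_final n)
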